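/- Suppose S₀(y) > 0 for every y ≥ x₀ and let σ : ℝ → ℝ be continuous. Then for every point x* with x₀ < x* < x(T), one has lim_{ν → 0⁺} (1/(2ν)) ∫_0^T 1{ |x(t) − x*| ≤ ν } · σ(x(t))² dt = σ(x*)² / S₀(x*). (This is the deterministic limit of the normalized local time Λ_T(x)/ε² established in the paper.) -/

import Mathlib

open Set MeasureTheory intervalIntegral

/-- Deterministic limit of the normalized local time: if `S₀(y) > 0` for all `y ≥ x₀` and
`x₀ < x* < x(T)`, then
`(1/(2ν)) ∫_0^T 1{|x(t) − x*| ≤ ν} σ(x(t))² dt → σ(x*)²/S₀(x*)` as `ν → 0⁺`. -/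
theorem stmt5 (T x₀ : ℝ) (hT : 0 < T) (S₀ σ x : ℝ → ℝ)
    (hS₀c : Continuous S₀) (hσc : Continuous σ)
    (hx0 : x 0 = x₀)
    (hx : ∀ t ∈ Icc (0:ℝ) T, HasDerivWithinAt x (S₀ (x t)) (Icc 0 T) t)
    (hpos : ∀ y, x₀ ≤ y → 0 < S₀ y)
    (xstar : ℝ) (h₁ : x₀ < xstar) (h₂ : xstar < x T) :
    Filter.Tendsto
      (fun ν : ℝ => (1 / (2 * ν)) *
        ∫ t in (0:ℝ)..T, if |x t - xstar| ≤ ν then σ (x t) ^ 2 else 0)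
      (nhdsWithin 0 (Ioi 0)) (nhds (σ xstar ^ 2 / S₀ xstar)) := by
  have hxc : ContinuousOn x (Icc 0 T) := fun t ht => (hx t ht).continuousWithinAt
  obtain ⟨δ, hδ, hδS⟩ : ∃ δ > 0, ∀ y : ℝ, |y - x₀| < δ → 0 < S₀ y := by
    have hc := Metric.continuousAt_iff.1 (hS₀c.continuousAt (x := x₀))
    obtain ⟨δ, hδ, hδ'⟩ := hc (S₀ x₀) (hpos _ le_rfl)
    refine ⟨δ, hδ, fun y hy => ?_⟩
    have := hδ' (by simpa [Real.dist_eq] using hy)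
    rw [Real.dist_eq] at this
    have := abs_lt.1 this
    linarith [this.1]
  have hSpos' : ∀ y : ℝ, x₀ - δ < y → 0 < S₀ y := by
    intro y hy
    rcases le_or_gt x₀ y with h | h
    · exact hpos y h
    · exact hδS y (by rw [abs_lt]; constructor <;> linarith)
  have key : ∀ t ∈ Icc (0:ℝ) T, x₀ - δ/2 < x t := by
    by_contra hcon
    push_neg at hcon
    obtain ⟨t₀, ht₀, ht₀'⟩ := hcon
    set K := {t ∈ Icc (0:ℝ) T | x t ≤ x₀ - δ/2} with hK
    have hKne : K.Nonempty := ⟨t₀, ht₀, ht₀'⟩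
    have hKc : IsClosed K := by
      have : K = Icc (0:ℝ) T ∩ x ⁻¹' (Iic (x₀ - δ/2)) := by
        ext t; simp [hK, and_comm]
      rw [this]
      exact hxc.preimage_isClosed_of_isClosed isClosed_Icc isClosed_Iic
    have hKbdd : BddBelow K := ⟨0, fun t ht => ht.1.1⟩
    set u := sInf K with hu
    have huK : u ∈ K := hKc.csInf_mem hKne hKbdd
    have hu0 : 0 < u := by
      rcases lt_or_eq_of_le huK.1.1 with h | h
      · exact h
      · exfalso; have := huK.2; rw [← h, hx0] at this; linarith
    have hlt : ∀ s : ℝ, 0 ≤ s → s < u → x₀ - δ/2 < x s := by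
      intro s hs hsu
      by_contra hcon2
      push_neg at hcon2
      exact absurd (csInf_le hKbdd ⟨⟨hs, hsu.le.trans huK.1.2⟩, hcon2⟩) (not_le.2 hsu)
    have hmono : StrictMonoOn x (Icc 0 u) := by
      apply strictMonoOn_of_deriv_pos (convex_Icc 0 u)
        (hxc.mono (Icc_subset_Icc le_rfl huK.1.2))
      intro s hs
      rw [interior_Icc] at hs
      have hsT : s ∈ Ioo (0:ℝ) T := ⟨hs.1, lt_of_lt_of_le hs.2 huK.1.2⟩
      have hd : HasDerivAt x (S₀ (x s)) s :=
        (hx s (Ioo_subset_Icc_self hsT)).hasDerivAt (Icc_mem_nhds hsT.1 hsT.2)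
      rw [hd.deriv]
      exact hSpos' _ (by linarith [hlt s hs.1.le hs.2])
    have := hmono (left_mem_Icc.2 hu0.le) (right_mem_Icc.2 hu0.le) hu0
    rw [hx0] at this
    linarith [huK.2]
  have hmono : StrictMonoOn x (Icc 0 T) := by
    apply strictMonoOn_of_deriv_pos (convex_Icc 0 T) hxc
    intro s hs
    rw [interior_Icc] at hs
    have hd : HasDerivAt x (S₀ (x s)) s :=
      (hx s (Ioo_subset_Icc_self hs)).hasDerivAt (Icc_mem_nhds hs.1 hs.2)
    rw [hd.deriv]
    exact hSpos' _ (by linarith [key s (Ioo_subset_Icc_self hs)])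
  have hge : ∀ t ∈ Icc (0:ℝ) T, x₀ ≤ x t := by
    intro t ht
    rcases eq_or_lt_of_le ht.1 with h | h
    · rw [← h, hx0]
    · exact le_of_lt (hx0 ▸ hmono (left_mem_Icc.2 hT.le) ht h)
  set b := x T with hb
  have hximg : x '' Icc 0 T = Icc x₀ b := by
    apply Subset.antisymm
    · rintro _ ⟨t, ht, rfl⟩
      exact ⟨hge t ht, hmono.monotoneOn ht (right_mem_Icc.2 hT.le) ht.2⟩
    · have := intermediate_value_Icc hT.le hxc
      rwa [hx0] at this
  set h : ℝ → ℝ := fun y => σ y ^ 2 / S₀ y with hh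
  set m := min (xstar - x₀) (b - xstar) with hm'
  have hm : 0 < m := lt_min (by linarith) (by linarith)
  have hsub : ∀ ν ∈ Ioo (0:ℝ) m,
      (∫ t in (0:ℝ)..T, if |x t - xstar| ≤ ν then σ (x t) ^ 2 else 0)
        = ∫ y in (xstar - ν)..(xstar + ν), h y := by
    intro ν hν
    have hν1 : x₀ ≤ xstar - ν := by
      have := lt_of_lt_of_le hν.2 (min_le_left _ _); linarith
    have hν2 : xstar + ν ≤ b := by
      have := lt_of_lt_of_le hν.2 (min_le_right _ _); linarith
    have hInj : InjOn x (Icc 0 T) := hmono.injOn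
    have hchg := integral_image_eq_integral_abs_deriv_smul measurableSet_Icc hx hInj
      (fun y => if |y - xstar| ≤ ν then σ y ^ 2 / S₀ y else 0)
    rw [hximg] at hchg
    rw [intervalIntegral.integral_of_le hT.le, ← integral_Icc_eq_integral_Ioc]
    have heq1 : ∫ t in Icc (0:ℝ) T, (if |x t - xstar| ≤ ν then σ (x t) ^ 2 else 0)
        = ∫ t in Icc (0:ℝ) T,
            |S₀ (x t)| • (if |x t - xstar| ≤ ν then σ (x t) ^ 2 / S₀ (x t) else 0) := by
      apply setIntegral_congr_fun measurableSet_Icc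
      intro t ht
      have hS : 0 < S₀ (x t) := hpos _ (hge t ht)
      by_cases hcase : |x t - xstar| ≤ ν
      · simp only [hcase, if_true, smul_eq_mul, abs_of_pos hS]
        field_simp
      · simp [hcase]
    rw [heq1, ← hchg]
    have hiff : ∀ y : ℝ, (|y - xstar| ≤ ν) ↔ y ∈ Icc (xstar - ν) (xstar + ν) := by
      intro y
      rw [mem_Icc, abs_le]
      constructor <;> (rintro ⟨p, q⟩; constructor <;> linarith)
    have heq2 : (fun y : ℝ => if |y - xstar| ≤ ν then σ y ^ 2 / S₀ y else 0)
        = fun y => (Icc (xstar - ν) (xstar + ν)).indicator h y := by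
      funext y
      rw [Set.indicator_apply, if_congr (hiff y) rfl rfl]
    rw [heq2, setIntegral_indicator measurableSet_Icc,
      inter_eq_self_of_subset_right (Icc_subset_Icc hν1 hν2),
      intervalIntegral.integral_of_le (by linarith [hν.1] : xstar - ν ≤ xstar + ν),
      integral_Icc_eq_integral_Ioc]
  have hS : 0 < S₀ xstar := hpos _ h₁.le
  have hlim : Filter.Tendsto
      (fun ν : ℝ => (1 / (2 * ν)) * ∫ y in (xstar - ν)..(xstar + ν), h y)
      (nhdsWithin 0 (Ioi 0)) (nhds (h xstar)) := by
    have hcont : ContinuousAt h xstar :=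
      ((hσc.continuousAt).pow 2).div hS₀c.continuousAt hS.ne'
    rw [Metric.tendsto_nhdsWithin_nhds]
    intro ε hε
    obtain ⟨δ₁, hδ₁, hδ₁'⟩ := Metric.continuousAt_iff.1 hcont (ε/2) (by linarith)
    refine ⟨min δ₁ (xstar - x₀), lt_min hδ₁ (by linarith), fun {ν} hν hd => ?_⟩
    rw [Real.dist_eq, sub_zero] at hd
    have hν0 : 0 < ν := hν
    rw [abs_of_pos hν0] at hd
    have hνδ : ν < δ₁ := lt_of_lt_of_le hd (min_le_left _ _)
    have hνx : ν < xstar - x₀ := lt_of_lt_of_le hd (min_le_right _ _)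
    have hint : IntervalIntegrable h volume (xstar - ν) (xstar + ν) := by
      apply ContinuousOn.intervalIntegrable
      intro y hy
      rw [uIcc_of_le (by linarith)] at hy
      have hyx : x₀ ≤ y := by have := hy.1; linarith
      exact (((hσc.continuousAt).pow 2).div hS₀c.continuousAt
        (hpos _ hyx).ne').continuousWithinAt
    have hbound : |(∫ y in (xstar - ν)..(xstar + ν), h y) - 2 * ν * h xstar|
        ≤ ε / 2 * (2 * ν) := by
      have heq : (∫ y in (xstar - ν)..(xstar + ν), h y) - 2 * ν * h xstar
          = ∫ y in (xstar - ν)..(xstar + ν), (h y - h xstar) := by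
        rw [intervalIntegral.integral_sub hint intervalIntegrable_const,
          intervalIntegral.integral_const, smul_eq_mul]
        ring
      rw [heq]
      have hb2 := intervalIntegral.norm_integral_le_of_norm_le_const
        (C := ε / 2) (f := fun y => h y - h xstar)
        (a := xstar - ν) (b := xstar + ν) ?_
      · rw [Real.norm_eq_abs] at hb2
        calc |∫ y in (xstar - ν)..(xstar + ν), (h y - h xstar)|
            ≤ ε / 2 * |xstar + ν - (xstar - ν)| := hb2
          _ = ε / 2 * (2 * ν) := by rw [abs_of_pos (by linarith)]; ring_nf
      · intro y hy
        rw [uIoc_of_le (by linarith), mem_Ioc] at hy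
        have hyd : dist y xstar < δ₁ := by
          rw [Real.dist_eq, abs_lt]; constructor <;> linarith [hy.1, hy.2]
        have := hδ₁' hyd
        rw [Real.dist_eq] at this
        exact (Real.norm_eq_abs _) ▸ this.le
    rw [Real.dist_eq]
    have heq2 : 1 / (2 * ν) * (∫ y in (xstar - ν)..(xstar + ν), h y) - h xstar
        = 1 / (2 * ν) * ((∫ y in (xstar - ν)..(xstar + ν), h y) - 2 * ν * h xstar) := by
      field_simp
    rw [heq2, abs_mul, abs_of_pos (by positivity : (0:ℝ) < 1 / (2 * ν))]
    calc 1 / (2 * ν) * |(∫ y in (xstar - ν)..(xstar + ν), h y) - 2 * ν * h xstar|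
        ≤ 1 / (2 * ν) * (ε / 2 * (2 * ν)) := by
          apply mul_le_mul_of_nonneg_left hbound (by positivity)
      _ = ε / 2 := by field_simp
      _ < ε := by linarith
  have hhx : h xstar = σ xstar ^ 2 / S₀ xstar := rfl
  rw [← hhx]
  refine Filter.Tendsto.congr' ?_ hlim
  filter_upwards [Ioo_mem_nhdsGT hm] with ν hν
  rw [hsub ν hν]
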